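/- Let ≤ be a linear order on the countably infinite set X with no greatest element. For a ∈ X let C_a be the set of all finitary operations f with f(x) ≤ a for all tuples x, and let D_a be the set of all finitary operations f such that for every tuple x whose maximum entry is ≥ a, f(x) ≥ max(x). Then the smallest local clone containing ⋃_{a∈X} C_a is the clone O of all finitary operations, and likewise the smallest local clone containing ⋃_{a∈X} D_a is O. -/

import Mathlib

/-- A finitary operation on `X`: an `(n+1)`-ary function `X^(n+1) → X` (arities are ≥ 1). -/
abbrev FinOp (X : Type) := Σ n : ℕ, (Fin (n + 1) → X) → X

/-- A finitary relation on `X`: an `(m+1)`-ary relation `ρ ⊆ X^(m+1)` (arities are ≥ 1). -/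
abbrev FinRel (X : Type) := Σ m : ℕ, Set (Fin (m + 1) → X)

variable {X : Type}

/-- `C` is a clone: it contains all projections and is closed under composition. -/
def IsClone (C : Set (FinOp X)) : Prop :=
  (∀ (n : ℕ) (k : Fin (n + 1)), (⟨n, fun x => x k⟩ : FinOp X) ∈ C) ∧
  (∀ (n m : ℕ) (f : (Fin (n + 1) → X) → X) (g : Fin (n + 1) → (Fin (m + 1) → X) → X),
    (⟨n, f⟩ : FinOp X) ∈ C → (∀ i, (⟨m, g i⟩ : FinOp X) ∈ C) →
    (⟨m, fun x => f fun i => g i x⟩ : FinOp X) ∈ C)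

/-- `C` is a local clone: a clone each of whose `n`-ary fragments is closed in the
product topology on `X^(X^n)`, where `X` carries the discrete topology. -/
def IsLocalClone (C : Set (FinOp X)) : Prop :=
  IsClone C ∧
  ∀ n : ℕ,
    letI : TopologicalSpace X := ⊥
    IsClosed {f : (Fin (n + 1) → X) → X | (⟨n, f⟩ : FinOp X) ∈ C}

/-- The smallest local clone containing `F` (the local clone generated by `F`). -/
def cllClosure (F : Set (FinOp X)) : Set (FinOp X) :=
  ⋂₀ {C : Set (FinOp X) | IsLocalClone C ∧ F ⊆ C}

/-- `f` preserves the relation `ρ`. -/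
def Preserves {n m : ℕ} (f : (Fin (n + 1) → X) → X) (ρ : Set (Fin (m + 1) → X)) : Prop :=
  ∀ r : Fin (n + 1) → Fin (m + 1) → X, (∀ i, r i ∈ ρ) → (fun j => f fun i => r i j) ∈ ρ

/-- `Pol R`: all finitary operations preserving every relation in `R`. -/
def Polymorphisms (R : Set (FinRel X)) : Set (FinOp X) :=
  {f | ∀ ρ ∈ R, Preserves f.2 ρ.2}

/-- `Inv F`: all finitary relations invariant under every operation in `F`. -/
def Invariants (F : Set (FinOp X)) : Set (FinRel X) :=
  {ρ | ∀ f ∈ F, Preserves f.2 ρ.2}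

/-- The clone of projections. -/
def projClone (X : Type) : Set (FinOp X) :=
  {f | ∃ k : Fin (f.1 + 1), f.2 = fun x => x k}

/-- The maximum entry of a tuple, with respect to a linear order. -/
def maxT {X : Type} [LinearOrder X] {n : ℕ} (x : Fin (n + 1) → X) : X :=
  Finset.univ.sup' Finset.univ_nonempty x


lemma local_mem {X : Type} (C : Set (FinOp X)) (hC : IsLocalClone C) (n : ℕ)
    (f : (Fin (n + 1) → X) → X)
    (h : ∀ I : Finset ((Fin (n + 1)) → X),
      ∃ g, (⟨n, g⟩ : FinOp X) ∈ C ∧ ∀ x ∈ I, g x = f x) :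
    (⟨n, f⟩ : FinOp X) ∈ C := by
  letI : TopologicalSpace X := ⊥
  have hcl := hC.2 n
  have hmem : f ∈ closure {g : (Fin (n + 1) → X) → X | (⟨n, g⟩ : FinOp X) ∈ C} := by
    rw [mem_closure_iff]
    intro U hU hfU
    obtain ⟨I, u, hu, hsub⟩ := isOpen_pi_iff.mp hU f hfU
    obtain ⟨g, hg, hag⟩ := h I
    refine ⟨g, hsub ?_, hg⟩
    intro x hx
    rw [hag x hx]
    exact (hu x hx).2
  rwa [hcl.closure_eq] at hmem

/-- For a linear order without greatest element on the countably infinite set `X`,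
the smallest local clone containing `⋃ₐ C_a` is the clone of all operations, and likewise
the smallest local clone containing `⋃ₐ D_a` is the clone of all operations. -/
theorem cllClosure_union_Ca_Da (X : Type) [Countable X] [Infinite X] [LinearOrder X]
    (hnomax : ∀ a : X, ∃ b : X, a < b) :
    cllClosure (⋃ a : X, {f : FinOp X | ∀ x, f.2 x ≤ a}) = Set.univ ∧
    cllClosure (⋃ a : X, {f : FinOp X | ∀ x, a ≤ maxT x → maxT x ≤ f.2 x}) = Set.univ := by
  have hz : Nonempty X := inferInstance
  obtain ⟨z⟩ := hz
  constructor
  · apply Set.eq_univ_of_forall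
    rintro ⟨n, f⟩ C ⟨hC, hFC⟩
    apply local_mem C hC
    intro I
    set g : (Fin (n + 1) → X) → X := fun x => if x ∈ I then f x else z with hg
    refine ⟨g, hFC ?_, fun x hx => by simp [hg, hx]⟩
    rw [Set.mem_iUnion]
    refine ⟨(insert z (I.image f)).max' (Finset.insert_nonempty _ _), fun x => ?_⟩
    apply Finset.le_max'
    by_cases hx : x ∈ I
    · simp only [hg, if_pos hx]
      exact Finset.mem_insert_of_mem (Finset.mem_image_of_mem f hx)
    · simp only [hg, if_neg hx]
      exact Finset.mem_insert_self _ _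
  · apply Set.eq_univ_of_forall
    rintro ⟨n, f⟩ C ⟨hC, hFC⟩
    apply local_mem C hC
    intro I
    set g : (Fin (n + 1) → X) → X := fun x => if x ∈ I then f x else maxT x with hg
    refine ⟨g, hFC ?_, fun x hx => by simp [hg, hx]⟩
    rw [Set.mem_iUnion]
    -- all coordinates appearing in tuples of I
    set J : Finset X := insert z (I.biUnion fun x => Finset.image x Finset.univ) with hJ
    obtain ⟨a, ha⟩ := hnomax (J.max' (Finset.insert_nonempty _ _))
    refine ⟨a, fun x hax => ?_⟩
    have hxI : x ∉ I := by
      intro hx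
      obtain ⟨i, _, hi⟩ := Finset.exists_mem_eq_sup' (Finset.univ_nonempty) x
      have : maxT x ∈ J := by
        rw [hJ]
        refine Finset.mem_insert_of_mem ?_
        rw [Finset.mem_biUnion]
        exact ⟨x, hx, by rw [maxT, hi]; exact Finset.mem_image_of_mem x (Finset.mem_univ i)⟩
      have h1 : maxT x ≤ J.max' (Finset.insert_nonempty _ _) := Finset.le_max' _ _ this
      exact absurd (lt_of_lt_of_le ha hax) (not_lt_of_ge h1)
    simp [hg, hxI]
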